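/- arXiv:1608.02595 — 2 statements merged into one kernel-verified Lean document; each statement's English description precedes it below -/
import Mathlib

section
/- Let p be an odd prime. (i) If O : V₆ → V₆ is an invertible linear map satisfying β(Ov, Ow) = β(v, w) for all v, w ∈ V₆ and O(𝟙₆) = 𝟙₆, then for every T ∈ Σ₃(p) the image O(T) again lies in Σ₃(p). (ii) For any two T, T' ∈ Σ₃(p) there exists such an invertible linear map O (β-preserving and fixing 𝟙₆) with O(T) = T'. -/
set_option maxHeartbeats 1000000


/-- The 6-dimensional phase space `V₆ = (Fin 3 → ZMod p) × (Fin 3 → ZMod p)`. -/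
abbrev V6 (p : ℕ) := (Fin 3 → ZMod p) × (Fin 3 → ZMod p)

/-- Dot product on `Fin 3 → ZMod p`. -/
def dotP {p : ℕ} (x y : Fin 3 → ZMod p) : ZMod p := ∑ i, x i * y i

/-- The bilinear form `β((x⃗,y⃗),(x⃗',y⃗')) = x⃗·x⃗' − y⃗·y⃗'`. -/
def betaF {p : ℕ} (v w : V6 p) : ZMod p := dotP v.1 w.1 - dotP v.2 w.2

/-- The all-ones vector `𝟙₆`. -/
def onesV (p : ℕ) : V6 p := (fun _ => 1, fun _ => 1)

/-- `Σ₃(p)`: the set of Lagrangian stochastic subspaces of `V₆`. -/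
def Sigma3 (p : ℕ) : Set (Submodule (ZMod p) (V6 p)) :=
  {T | Module.finrank (ZMod p) T = 3 ∧ (∀ v ∈ T, ∀ w ∈ T, betaF v w = 0) ∧ onesV p ∈ T}

section Aux

variable {p : ℕ} [Fact p.Prime]

private lemma dotP_comm (x y : Fin 3 → ZMod p) : dotP x y = dotP y x := by
  simp [dotP, mul_comm]

private lemma betaF_comm (v w : V6 p) : betaF v w = betaF w v := by
  simp [betaF, dotP_comm]

/-- `β` as a bilinear form. -/
private noncomputable def BB (p : ℕ) [Fact p.Prime] :
    LinearMap.BilinForm (ZMod p) (V6 p) :=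
  LinearMap.mk₂ (ZMod p) betaF
    (fun v v' w => by
      simp only [betaF, dotP, Prod.fst_add, Prod.snd_add, Pi.add_apply, add_mul,
        Finset.sum_add_distrib]
      ring)
    (fun a v w => by
      simp only [betaF, dotP, Prod.smul_fst, Prod.smul_snd, Pi.smul_apply, smul_eq_mul,
        mul_sub, Finset.mul_sum]
      congr 1 <;> exact Finset.sum_congr rfl fun x _ => by ring)
    (fun v w w' => by
      simp only [betaF, dotP, Prod.fst_add, Prod.snd_add, Pi.add_apply, mul_add,
        Finset.sum_add_distrib]
      ring)
    (fun a v w => by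
      simp only [betaF, dotP, Prod.smul_fst, Prod.smul_snd, Pi.smul_apply, smul_eq_mul,
        mul_sub, Finset.mul_sum]
      congr 1 <;> exact Finset.sum_congr rfl fun x _ => by ring)

private lemma BB_apply (v w : V6 p) : BB p v w = betaF v w := rfl

private lemma dotP_single (x : Fin 3 → ZMod p) (i : Fin 3) :
    (∑ j, x j * (Pi.single i 1 : Fin 3 → ZMod p) j) = x i := by
  simp [Pi.single_apply]

private lemma BB_nondegenerate : (BB p).Nondegenerate := by
  refine (LinearMap.IsRefl.nondegenerate_iff_separatingLeft
    (fun x y h => by rw [BB_apply] at h ⊢; rw [betaF_comm]; exact h)).mpr ?_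
  intro v hv
  have h1 : ∀ i, v.1 i = 0 := by
    intro i
    have := hv ((Pi.single i 1 : Fin 3 → ZMod p), 0)
    rw [BB_apply] at this
    simpa [betaF, dotP, dotP_single] using this
  have h2 : ∀ i, v.2 i = 0 := by
    intro i
    have := hv ((0 : Fin 3 → ZMod p), (Pi.single i 1 : Fin 3 → ZMod p))
    rw [BB_apply] at this
    simpa [betaF, dotP, dotP_single, neg_eq_zero] using this
  ext i
  · exact h1 i
  · exact h2 i

private lemma BB_refl : (BB p).IsRefl := fun x y h => by
  rw [BB_apply] at h ⊢
  rw [betaF_comm]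
  exact h

private lemma finrank_V6 : Module.finrank (ZMod p) (V6 p) = 6 := by
  simp [Module.finrank_prod]

private lemma onesV_ne_zero : onesV p ≠ 0 := by
  intro h
  have : (onesV p).1 0 = 0 := by rw [h]; rfl
  exact one_ne_zero this

private lemma zmod_two_ne_zero (hp2 : p ≠ 2) : (2 : ZMod p) ≠ 0 := by
  have hp := (Fact.out : p.Prime)
  intro h
  have : p ∣ 2 := by
    have := (ZMod.natCast_eq_zero_iff 2 p).mp (by exact_mod_cast h)
    exact this
  rcases (Nat.prime_dvd_prime_iff_eq hp Nat.prime_two).mp this with rfl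
  exact hp2 rfl

/-- For every Lagrangian stochastic subspace there is an adapted hyperbolic frame. -/
private lemma exists_frame (hp2 : p ≠ 2) (T : Submodule (ZMod p) (V6 p))
    (hT : T ∈ Sigma3 p) :
    ∃ e f : Fin 3 → V6 p,
      Submodule.span (ZMod p) (Set.range e) = T ∧
      (∑ i, e i) = onesV p ∧
      (∀ i j, betaF (e i) (e j) = 0) ∧
      (∀ i j, betaF (f i) (f j) = 0) ∧
      (∀ i j, betaF (e i) (f j) = if i = j then 1 else 0) := by
  obtain ⟨hrank, hiso, honem⟩ := hT
  haveI : FiniteDimensional (ZMod p) T := inferInstance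
  set oneT : T := ⟨onesV p, honem⟩ with honeT
  have honeT_ne : oneT ≠ 0 := by
    intro h
    exact onesV_ne_zero (congrArg Subtype.val h)
  let b : Module.Basis (Fin 3) (ZMod p) T := Module.finBasisOfFinrankEq (ZMod p) T hrank
  obtain ⟨j, hj⟩ : ∃ j, b.repr oneT j ≠ 0 := by
    by_contra h
    push_neg at h
    apply honeT_ne
    rw [← b.sum_repr oneT]
    simp [h]
  set d : Fin 3 → T :=
    Function.update (fun i => b i) j (oneT - ∑ k ∈ Finset.univ.erase j, b k) with hd
  have hd_j : d j = oneT - ∑ k ∈ Finset.univ.erase j, b k := by simp [hd]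
  have hd_ne : ∀ i, i ≠ j → d i = b i := fun i hi => by simp [hd, Function.update_of_ne hi]
  -- sum of d is oneT
  have hsum_d : ∑ i, d i = oneT := by
    rw [← Finset.add_sum_erase _ d (Finset.mem_univ j), hd_j]
    rw [Finset.sum_congr rfl (fun i hi => hd_ne i (Finset.ne_of_mem_erase hi))]
    exact sub_add_cancel _ _
  -- span of d is top
  have hspan_d : ⊤ ≤ Submodule.span (ZMod p) (Set.range d) := by
    rw [← b.span_eq]
    rw [Submodule.span_le]
    rintro x ⟨i, rfl⟩
    by_cases hij : i = j
    · subst hij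
      have hone_mem : oneT ∈ Submodule.span (ZMod p) (Set.range d) := by
        have : oneT = d i + ∑ k ∈ Finset.univ.erase i, b k := by
          rw [hd_j]; exact (sub_add_cancel _ _).symm
        rw [this]
        refine Submodule.add_mem _ (Submodule.subset_span ⟨i, rfl⟩) ?_
        refine Submodule.sum_mem _ (fun k hk => ?_)
        rw [← hd_ne k (Finset.ne_of_mem_erase hk)]
        exact Submodule.subset_span ⟨k, rfl⟩
      have hrepr : b.repr oneT i • b i + ∑ k ∈ Finset.univ.erase i, b.repr oneT k • b k
          = oneT := by
        rw [Finset.add_sum_erase _ (fun k => b.repr oneT k • b k) (Finset.mem_univ i)]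
        exact b.sum_repr oneT
      have hbi : b.repr oneT i • b i
          = oneT - ∑ k ∈ Finset.univ.erase i, b.repr oneT k • b k :=
        eq_sub_of_add_eq hrepr
      have hmem : b.repr oneT i • b i ∈ Submodule.span (ZMod p) (Set.range d) := by
        rw [hbi]
        refine Submodule.sub_mem _ hone_mem ?_
        refine Submodule.sum_mem _ (fun k hk => ?_)
        refine Submodule.smul_mem _ _ ?_
        rw [← hd_ne k (Finset.ne_of_mem_erase hk)]
        exact Submodule.subset_span ⟨k, rfl⟩
      have := Submodule.smul_mem _ (b.repr oneT i)⁻¹ hmem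
      rwa [← smul_assoc, smul_eq_mul, inv_mul_cancel₀ hj, one_smul] at this
    · rw [← hd_ne i hij]
      exact Submodule.subset_span ⟨i, rfl⟩
  have hd_indep : LinearIndependent (ZMod p) d :=
    linearIndependent_of_top_le_span_of_card_eq_finrank hspan_d (by simp [hrank])
  -- push to V6
  set e : Fin 3 → V6 p := fun i => (d i : V6 p) with he
  have he_mem : ∀ i, e i ∈ T := fun i => (d i).2
  have he_span : Submodule.span (ZMod p) (Set.range e) = T := by
    have hre : Set.range e = T.subtype '' Set.range d := by
      rw [← Set.range_comp]; rfl
    rw [hre, Submodule.span_image, (top_le_iff.mp hspan_d), Submodule.map_subtype_top]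
  have he_sum : ∑ i, e i = onesV p := by
    have : ((∑ i, d i : T) : V6 p) = onesV p := by rw [hsum_d]
    simpa using this
  have he_indep : LinearIndependent (ZMod p) e :=
    hd_indep.map' T.subtype T.ker_subtype
  have hee : ∀ i j, betaF (e i) (e j) = 0 := fun i j =>
    hiso _ (he_mem i) _ (he_mem j)
  -- surjectivity of v ↦ (β(e i, v))_i
  set Φ : V6 p →ₗ[ZMod p] (Fin 3 → ZMod p) := LinearMap.pi (fun i => BB p (e i)) with hΦ
  have hker : LinearMap.ker Φ = (BB p).orthogonal T := by
    ext v
    rw [LinearMap.mem_ker, LinearMap.BilinForm.mem_orthogonal_iff]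
    constructor
    · intro h n hn
      have h' : ∀ i, BB p (e i) v = 0 := fun i => by
        simpa [hΦ, LinearMap.pi_apply] using congrFun h i
      rw [← he_span] at hn
      induction hn using Submodule.span_induction with
      | mem x hx =>
          obtain ⟨i, rfl⟩ := hx
          exact h' i
      | zero =>
          simp only [LinearMap.BilinForm.isOrtho_def, LinearMap.map_zero₂]
      | add x y _ _ hx hy =>
          rw [LinearMap.map_add₂, hx, hy, add_zero]
      | smul a x _ hx =>
          rw [LinearMap.map_smul₂, hx, smul_zero]
    · intro h
      funext i
      simpa [hΦ, LinearMap.pi_apply] using h (e i) (he_mem i)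
  have hker_rank : Module.finrank (ZMod p) (LinearMap.ker Φ) = 3 := by
    rw [hker, LinearMap.BilinForm.finrank_orthogonal BB_nondegenerate T,
      finrank_V6, hrank]
  have hΦ_surj : Function.Surjective Φ := by
    rw [← LinearMap.range_eq_top]
    apply Submodule.eq_top_of_finrank_eq
    have := Φ.finrank_range_add_finrank_ker
    rw [hker_rank, finrank_V6] at this
    simp only [Module.finrank_pi, Fintype.card_fin, Finset.card_univ]
    omega
  set g : Fin 3 → V6 p := fun i => (hΦ_surj (Pi.single i 1)).choose with hg
  have hg_spec : ∀ i j, betaF (e i) (g j) = if i = j then 1 else 0 := by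
    intro i j
    have := congrFun (hΦ_surj (Pi.single j 1)).choose_spec i
    simpa [hΦ, Pi.single_apply, BB_apply, hg] using this
  set f : Fin 3 → V6 p :=
    fun i => g i - (2⁻¹ : ZMod p) • ∑ k, betaF (g i) (g k) • e k with hf
  -- expansion of `f` in the second argument
  have hstep : ∀ (i : Fin 3) (v : V6 p), betaF v (f i)
      = betaF v (g i) - (2⁻¹ : ZMod p) * ∑ k, betaF (g i) (g k) * betaF v (e k) := by
    intro i v
    have h0 : BB p v (f i) = BB p v (g i)
        - (2⁻¹ : ZMod p) * ∑ k, betaF (g i) (g k) * BB p v (e k) := by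
      simp only [hf, map_sub, map_smul, map_sum, smul_eq_mul, Finset.mul_sum]
    exact h0
  have hef : ∀ i j, betaF (e i) (f j) = if i = j then 1 else 0 := by
    intro i j
    rw [hstep j (e i)]
    simp [hee, hg_spec]
  have hge : ∀ i j, betaF (g i) (e j) = if j = i then 1 else 0 := by
    intro i j; rw [betaF_comm]; exact hg_spec j i
  have hfe : ∀ i j, betaF (f i) (e j) = if j = i then 1 else 0 := by
    intro i j; rw [betaF_comm]; exact hef j i
  have h2inv : (2⁻¹ : ZMod p) + 2⁻¹ = 1 := by
    rw [← two_mul, mul_inv_cancel₀ (zmod_two_ne_zero hp2)]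
  have hfg : ∀ i j, betaF (f i) (g j)
      = betaF (g j) (g i) - (2⁻¹ : ZMod p) * betaF (g i) (g j) := by
    intro i j
    rw [betaF_comm (f i) (g j), hstep i (g j)]
    congr 1
    have : ∀ k, betaF (g j) (e k) = if k = j then 1 else 0 := fun k => hge j k
    simp [this, mul_ite]
  have hff : ∀ i j, betaF (f i) (f j) = 0 := by
    intro i j
    rw [hstep j (f i), hfg i j]
    have hsum : ∑ k, betaF (g j) (g k) * betaF (f i) (e k) = betaF (g j) (g i) := by
      simp [hfe, mul_ite]
    rw [hsum, betaF_comm (g j) (g i)]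
    rw [show betaF (g i) (g j) - 2⁻¹ * betaF (g i) (g j) - 2⁻¹ * betaF (g i) (g j)
        = betaF (g i) (g j) * (1 - (2⁻¹ + 2⁻¹)) by ring, h2inv]
    ring
  exact ⟨e, f, he_span, he_sum, hee, hff, hef⟩

/-- A hyperbolic frame is linearly independent. -/
private lemma frame_indep (e f : Fin 3 → V6 p)
    (hee : ∀ i j, betaF (e i) (e j) = 0)
    (hff : ∀ i j, betaF (f i) (f j) = 0)
    (hef : ∀ i j, betaF (e i) (f j) = if i = j then 1 else 0) :
    LinearIndependent (ZMod p) (Sum.elim e f) := by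
  rw [Fintype.linearIndependent_iff]
  intro a ha
  have hfe : ∀ i j, betaF (f i) (e j) = if j = i then 1 else 0 := by
    intro i j; rw [betaF_comm]; exact hef j i
  have hsplit : ∑ s, a s • Sum.elim e f s
      = ∑ i, a (Sum.inl i) • e i + ∑ j, a (Sum.inr j) • f j := by
    rw [Fintype.sum_sum_type]; rfl
  rw [hsplit] at ha
  have hR : ∀ k, a (Sum.inr k) = 0 := by
    intro k
    have h0 : BB p (e k) (∑ i, a (Sum.inl i) • e i + ∑ j, a (Sum.inr j) • f j) = 0 := by
      rw [ha]; exact map_zero _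
    have h1 : (∑ i, a (Sum.inl i) * betaF (e k) (e i))
        + ∑ j, a (Sum.inr j) * betaF (e k) (f j) = 0 := by
      simpa only [map_add, map_sum, map_smul, smul_eq_mul, BB_apply] using h0
    simpa [hee, hef, mul_ite] using h1
  have hL : ∀ k, a (Sum.inl k) = 0 := by
    intro k
    have h0 : BB p (f k) (∑ i, a (Sum.inl i) • e i + ∑ j, a (Sum.inr j) • f j) = 0 := by
      rw [ha]; exact map_zero _
    have h1 : (∑ i, a (Sum.inl i) * betaF (f k) (e i))
        + ∑ j, a (Sum.inr j) * betaF (f k) (f j) = 0 := by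
      simpa only [map_add, map_sum, map_smul, smul_eq_mul, BB_apply] using h0
    simpa [hfe, hff, mul_ite] using h1
  rintro (i | j)
  · exact hL i
  · exact hR j

end Aux

/-- (i) Any invertible linear map `O` on `V₆` preserving `β` and fixing `𝟙₆` maps elements
of `Σ₃(p)` to elements of `Σ₃(p)`; (ii) the group of such maps acts transitively on `Σ₃(p)`. -/
theorem orthogonal_stochastic_preserves_and_transitive (p : ℕ) [Fact p.Prime] (hodd : p ≠ 2) :
    (∀ O : V6 p ≃ₗ[ZMod p] V6 p,
      (∀ v w : V6 p, betaF (O v) (O w) = betaF v w) → O (onesV p) = onesV p →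
      ∀ T ∈ Sigma3 p, T.map (O : V6 p →ₗ[ZMod p] V6 p) ∈ Sigma3 p) ∧
    (∀ T ∈ Sigma3 p, ∀ T' ∈ Sigma3 p, ∃ O : V6 p ≃ₗ[ZMod p] V6 p,
      (∀ v w : V6 p, betaF (O v) (O w) = betaF v w) ∧ O (onesV p) = onesV p ∧
      T.map (O : V6 p →ₗ[ZMod p] V6 p) = T') := by
  constructor
  · intro O hOβ hO1 T hT
    obtain ⟨hrank, hiso, hone⟩ := hT
    refine ⟨?_, ?_, ?_⟩
    · rw [LinearEquiv.finrank_map_eq]; exact hrank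
    · rintro v ⟨a, ha, rfl⟩ w ⟨b, hb, rfl⟩
      simp only [LinearEquiv.coe_coe]
      rw [hOβ]
      exact hiso a ha b hb
    · exact ⟨onesV p, hone, by simpa using hO1⟩
  · intro T hT T' hT'
    obtain ⟨e, f, hspan, hsum, hee, hff, hef⟩ := exists_frame hodd T hT
    obtain ⟨e', f', hspan', hsum', hee', hff', hef'⟩ := exists_frame hodd T' hT'
    have hcard : Fintype.card (Fin 3 ⊕ Fin 3) = Module.finrank (ZMod p) (V6 p) := by
      simp [finrank_V6]
    let bE : Module.Basis (Fin 3 ⊕ Fin 3) (ZMod p) (V6 p) :=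
      basisOfLinearIndependentOfCardEqFinrank (frame_indep e f hee hff hef) hcard
    let bE' : Module.Basis (Fin 3 ⊕ Fin 3) (ZMod p) (V6 p) :=
      basisOfLinearIndependentOfCardEqFinrank (frame_indep e' f' hee' hff' hef') hcard
    have hbE : ⇑bE = Sum.elim e f := coe_basisOfLinearIndependentOfCardEqFinrank _ _
    have hbE' : ⇑bE' = Sum.elim e' f' := coe_basisOfLinearIndependentOfCardEqFinrank _ _
    set O : V6 p ≃ₗ[ZMod p] V6 p := bE.equiv bE' (Equiv.refl _) with hO
    have hOE : ∀ s, O (Sum.elim e f s) = Sum.elim e' f' s := by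
      intro s
      have := bE.equiv_apply (i := s) bE' (Equiv.refl _)
      rw [hbE, hbE'] at this
      simpa [hO] using this
    have hOe : ∀ i, O (e i) = e' i := fun i => hOE (Sum.inl i)
    have hOf : ∀ i, O (f i) = f' i := fun i => hOE (Sum.inr i)
    have hβ : ∀ v w : V6 p, betaF (O v) (O w) = betaF v w := by
      have key : (BB p).compl₁₂ O.toLinearMap O.toLinearMap = BB p := by
        apply bE.ext
        intro s
        apply bE.ext
        intro t
        simp only [LinearMap.compl₁₂_apply, LinearEquiv.coe_coe, hbE]
        rw [hOE s, hOE t]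
        rcases s with i | i <;> rcases t with j | j <;>
          simp [BB_apply, hee, hff, hef, hee', hff', hef', betaF_comm (f _) (e _),
            betaF_comm (f' _) (e' _)]
      intro v w
      have h2 := congrArg (fun L : LinearMap.BilinForm (ZMod p) (V6 p) => L v w) key
      simpa only [LinearMap.compl₁₂_apply, BB_apply, LinearEquiv.coe_coe] using h2
    refine ⟨O, hβ, ?_, ?_⟩
    · have : O (onesV p) = ∑ i, e' i := by
        rw [← hsum, map_sum]
        simp_rw [hOe]
      rw [this, hsum']
    · have hcomp : (⇑(O : V6 p →ₗ[ZMod p] V6 p)) ∘ e = e' := by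
        funext i
        simpa using hOe i
      rw [← hspan, ← hspan', Submodule.map_span, ← Set.range_comp, hcomp]
end

section
/- Let (V, E, ends) be a finite multigraph with boundary vertices V_∂ ⊆ V, and let A, B ⊆ V_∂ be disjoint. Let V_A be a minimal cut for A, let V_B be a minimal cut for B, and set V₀ = V_A ∩ V_B. Then V_A \ V₀ is a minimal cut for A, or V_B \ V₀ is a minimal cut for B. -/
open Classical in
/-- The edge boundary `∂W` of a finset of vertices `W` in a finite multigraph given by
`ends : E → V × V`: the edges with exactly one endpoint in `W`. -/
noncomputable def edgeBoundary {V E : Type*} [Fintype V] [Fintype E]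
    (ends : E → V × V) (W : Finset V) : Finset E :=
  Finset.univ.filter fun e =>
    ((ends e).1 ∈ W ∧ (ends e).2 ∉ W) ∨ ((ends e).1 ∉ W ∧ (ends e).2 ∈ W)

/-- `W` is a cut for the boundary subset `X ⊆ V_∂` if `W ∩ V_∂ = X`. -/
def IsCut {V : Type*} [DecidableEq V] (Vbd : Finset V) (X W : Finset V) : Prop :=
  W ∩ Vbd = X

/-- `W` is a minimal cut for `X` if it is a cut for `X` minimizing `|∂W|`. -/
def IsMinCut {V E : Type*} [Fintype V] [Fintype E] [DecidableEq V]
    (ends : E → V × V) (Vbd : Finset V) (X W : Finset V) : Prop :=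
  IsCut Vbd X W ∧ ∀ W', IsCut Vbd X W' →
    (edgeBoundary ends W).card ≤ (edgeBoundary ends W').card

open Classical in
/-- Posimodularity of the edge-boundary function. -/
lemma edgeBoundary_posimodular {V E : Type*} [Fintype V] [Fintype E] [DecidableEq V]
    (ends : E → V × V) (X Y : Finset V) :
    (edgeBoundary ends (X \ Y)).card + (edgeBoundary ends (Y \ X)).card ≤
      (edgeBoundary ends X).card + (edgeBoundary ends Y).card := by
  classical
  simp only [edgeBoundary, Finset.card_filter]
  rw [← Finset.sum_add_distrib, ← Finset.sum_add_distrib]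
  refine Finset.sum_le_sum fun e _ => ?_
  by_cases h1 : (ends e).1 ∈ X <;> by_cases h2 : (ends e).2 ∈ X <;>
    by_cases h3 : (ends e).1 ∈ Y <;> by_cases h4 : (ends e).2 ∈ Y <;>
    simp [Finset.mem_sdiff, h1, h2, h3, h4]

/-- If `V_A`, `V_B` are minimal cuts for disjoint boundary regions `A`, `B`, and
`V₀ = V_A ∩ V_B`, then `V_A \ V₀` is a minimal cut for `A` or `V_B \ V₀` is a minimal
cut for `B`. -/
theorem minCut_sdiff_of_disjoint {V E : Type*} [Fintype V] [Fintype E] [DecidableEq V]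
    (ends : E → V × V) (Vbd : Finset V) (A B : Finset V)
    (hA : A ⊆ Vbd) (hB : B ⊆ Vbd) (hAB : Disjoint A B)
    (VA VB : Finset V) (hVA : IsMinCut ends Vbd A VA) (hVB : IsMinCut ends Vbd B VB) :
    IsMinCut ends Vbd A (VA \ (VA ∩ VB)) ∨ IsMinCut ends Vbd B (VB \ (VA ∩ VB)) := by
  obtain ⟨hcA, hminA⟩ := hVA
  obtain ⟨hcB, hminB⟩ := hVB
  have e1 : VA \ (VA ∩ VB) = VA \ VB := by
    ext x; simp [Finset.mem_sdiff]
  have e2 : VB \ (VA ∩ VB) = VB \ VA := by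
    ext x; simp [Finset.mem_sdiff]
  -- VA \ VB is a cut for A
  have cutA : IsCut Vbd A (VA \ VB) := by
    unfold IsCut at *
    ext x
    simp only [Finset.mem_inter, Finset.mem_sdiff]
    constructor
    · rintro ⟨⟨hx1, hx2⟩, hx3⟩
      rw [← hcA]; exact Finset.mem_inter.mpr ⟨hx1, hx3⟩
    · intro hx
      have hx' : x ∈ VA ∩ Vbd := by rw [hcA]; exact hx
      refine ⟨⟨(Finset.mem_inter.mp hx').1, fun hxB => ?_⟩, (Finset.mem_inter.mp hx').2⟩
      have : x ∈ VB ∩ Vbd := Finset.mem_inter.mpr ⟨hxB, (Finset.mem_inter.mp hx').2⟩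
      rw [hcB] at this
      simpa using hAB.le_bot (Finset.mem_inter.mpr ⟨hx, this⟩ : x ∈ A ⊓ B)
  have cutB : IsCut Vbd B (VB \ VA) := by
    unfold IsCut at *
    ext x
    simp only [Finset.mem_inter, Finset.mem_sdiff]
    constructor
    · rintro ⟨⟨hx1, hx2⟩, hx3⟩
      rw [← hcB]; exact Finset.mem_inter.mpr ⟨hx1, hx3⟩
    · intro hx
      have hx' : x ∈ VB ∩ Vbd := by rw [hcB]; exact hx
      refine ⟨⟨(Finset.mem_inter.mp hx').1, fun hxA => ?_⟩, (Finset.mem_inter.mp hx').2⟩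
      have : x ∈ VA ∩ Vbd := Finset.mem_inter.mpr ⟨hxA, (Finset.mem_inter.mp hx').2⟩
      rw [hcA] at this
      simpa using hAB.le_bot (Finset.mem_inter.mpr ⟨this, hx⟩ : x ∈ A ⊓ B)
  have posi := edgeBoundary_posimodular ends VA VB
  have h1 := hminA _ cutA
  have h2 := hminB _ cutB
  have eqA : (edgeBoundary ends (VA \ VB)).card = (edgeBoundary ends VA).card := by omega
  left
  rw [e1]
  exact ⟨cutA, fun W' hW' => eqA ▸ hminA W' hW'⟩
end
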